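/- Let (X,d) be a metric space, A ⊆ X a nonempty closed set, and φ : A → ℝ a bounded continuous function. Define Ψ[φ] : X → ℝ by Ψ[φ](a) = φ(a) for a ∈ A and Ψ[φ](p) = inf_{a∈A} [φ(a) + d(a,p)/d(p,A) − 1] for p ∈ X\A. Then Ψ[φ] is continuous on X. -/

import Mathlib

open Metric Set

private lemma inf_div_sub_one {ι : Type*} [Nonempty ι] (g : ι → ℝ)
    (hb : BddBelow (Set.range g)) {c : ℝ} (hc : 0 < c) :
    ⨅ i, (g i / c - 1) = (⨅ i, g i) / c - 1 := by
  have hb' : BddBelow (Set.range fun i => g i / c - 1) := by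
    obtain ⟨m, hm⟩ := hb
    refine ⟨m / c - 1, ?_⟩
    rintro x ⟨i, rfl⟩
    have h1 : m ≤ g i := hm ⟨i, rfl⟩
    have : m / c ≤ g i / c := by gcongr
    simpa using sub_le_sub_right this 1
  apply le_antisymm
  · have h : ∀ i, ((⨅ i, (g i / c - 1)) + 1) * c ≤ g i := by
      intro i
      have h1 : (⨅ i, (g i / c - 1)) ≤ g i / c - 1 := ciInf_le hb' i
      have h2 : ((⨅ i, (g i / c - 1)) + 1) ≤ g i / c := by linarith
      calc ((⨅ i, (g i / c - 1)) + 1) * c ≤ (g i / c) * c := by nlinarith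
        _ = g i := div_mul_cancel₀ _ hc.ne'
    have h3 := (le_div_iff₀ hc).mpr (le_ciInf h)
    linarith
  · apply le_ciInf
    intro i
    have h1 : (⨅ i, g i) ≤ g i := ciInf_le hb i
    have : (⨅ i, g i) / c ≤ g i / c := by gcongr
    linarith

theorem stmt_4 {X : Type*} [MetricSpace X] (A : Set X) (hA : A.Nonempty)
    (hAc : IsClosed A) (φ : X → ℝ)
    (hφc : ContinuousOn φ A) (hφb : ∃ C : ℝ, ∀ a ∈ A, |φ a| ≤ C)
    (f : X → ℝ)
    (hfA : ∀ a ∈ A, f a = φ a)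
    (hf : ∀ p ∉ A, f p = ⨅ a : A, (φ a + dist (a : X) p / Metric.infDist p A - 1)) :
    Continuous f := by
  haveI : Nonempty ↥A := hA.to_subtype
  obtain ⟨C, hC⟩ := hφb
  obtain ⟨a₀, ha₀⟩ := hA
  have hC0 : 0 ≤ C := (abs_nonneg _).trans (hC a₀ ha₀)
  have hDpos : ∀ p ∉ A, 0 < infDist p A := fun p hp =>
    (hAc.notMem_iff_infDist_pos ⟨a₀, ha₀⟩).mp hp
  have hDnn : ∀ p : X, 0 ≤ infDist p A := fun p => infDist_nonneg
  set F : X → ℝ := fun p => ⨅ a : A, (φ a * infDist p A + dist (a : X) p) with hF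
  have hbF : ∀ p : X, BddBelow (Set.range fun a : A => φ a * infDist p A + dist (a : X) p) := by
    intro p
    refine ⟨-C * infDist p A, ?_⟩
    rintro x ⟨a, rfl⟩
    show -C * infDist p A ≤ φ a * infDist p A + dist (a : X) p
    have h1 : -C ≤ φ a := (abs_le.mp (hC a a.2)).1
    have h2 := hDnn p
    nlinarith [dist_nonneg (x := (a : X)) (y := p)]
  have hkey : ∀ p q : X, F p ≤ F q + (C + 1) * dist p q := by
    intro p q
    rw [hF, ← sub_le_iff_le_add]
    apply le_ciInf
    intro a
    show _ - (C + 1) * dist p q ≤ φ a * infDist q A + dist (a : X) q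
    rw [sub_le_iff_le_add]
    have h1 : (⨅ a : A, (φ a * infDist p A + dist (a : X) p)) ≤
        φ a * infDist p A + dist (a : X) p := ciInf_le (hbF p) a
    have h2 : infDist p A ≤ infDist q A + dist p q := infDist_le_infDist_add_dist
    have h3 : infDist q A ≤ infDist p A + dist p q := by
      rw [dist_comm]; exact infDist_le_infDist_add_dist
    have h4 : dist (a : X) p ≤ dist (a : X) q + dist q p := dist_triangle _ _ _
    have h5 := abs_le.mp (hC a a.2)
    have hd := dist_nonneg (x := p) (y := q)
    rw [dist_comm q p] at h4
    nlinarith [mul_nonneg (sub_nonneg.mpr h5.2)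
        (sub_nonneg.mpr (by linarith : infDist p A - infDist q A ≤ dist p q)),
      mul_nonneg (sub_nonneg.mpr (neg_le.mp h5.1)) hd]
  have hFcont : Continuous F := by
    have : LipschitzWith ⟨C + 1, by positivity⟩ F :=
      LipschitzWith.of_dist_le_mul (fun p q => by
        rw [Real.dist_eq, abs_sub_le_iff]
        constructor
        · have := hkey p q; change _ ≤ (C + 1) * dist p q; linarith
        · have := hkey q p; rw [dist_comm q p] at this
          change _ ≤ (C + 1) * dist p q; linarith)
    exact this.continuous
  have hbdd : ∀ p : X, BddBelow (Set.range fun a : A =>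
      φ a + dist (a : X) p / infDist p A - 1) := by
    intro p
    refine ⟨-C - 1, ?_⟩
    rintro x ⟨a, rfl⟩
    show -C - 1 ≤ φ a + dist (a : X) p / infDist p A - 1
    have h1 : -C ≤ φ a := (abs_le.mp (hC a a.2)).1
    have h2 : 0 ≤ dist (a : X) p / infDist p A := div_nonneg dist_nonneg (hDnn p)
    linarith
  rw [continuous_iff_continuousAt]
  intro x
  by_cases hx : x ∈ A
  · -- continuity at a point of A
    rw [Metric.continuousAt_iff]
    intro ε hε
    have hcx : ContinuousWithinAt φ A x := hφc x hx
    rw [Metric.continuousWithinAt_iff] at hcx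
    obtain ⟨δ₁, hδ₁, hδ₁'⟩ := hcx (ε / 2) (by linarith)
    set M : ℝ := C + 2 + |φ x| with hM
    have hM0 : 0 < M := by positivity
    set δ : ℝ := min (δ₁ / 3) (δ₁ / (2 * M)) with hδdef
    have hδ0 : 0 < δ := lt_min (by linarith) (by positivity)
    have hδa : δ ≤ δ₁ / 3 := min_le_left _ _
    have hδb : δ ≤ δ₁ / (2 * M) := min_le_right _ _
    refine ⟨δ, hδ0, ?_⟩
    intro q hq
    have hfx : f x = φ x := hfA x hx
    by_cases hqA : q ∈ A
    · rw [hfA q hqA, hfx, Real.dist_eq]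
      have := hδ₁' hqA (lt_of_lt_of_le hq (by linarith))
      rw [Real.dist_eq] at this
      linarith [abs_lt.mp this]
    · have hD : 0 < infDist q A := hDpos q hqA
      have hDle : infDist q A ≤ dist q x := infDist_le_dist_of_mem hx
      have hDlt : infDist q A < δ := lt_of_le_of_lt hDle hq
      rw [hf q hqA, hfx, Real.dist_eq, abs_lt]
      set ε' : ℝ := min (ε / 2) 1 with hε'
      have hε'0 : 0 < ε' := lt_min (by linarith) one_pos
      have hε'1 : ε' ≤ 1 := min_le_right _ _
      have hε'2 : ε' ≤ ε / 2 := min_le_left _ _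
      constructor
      · -- lower bound
        have hlow : φ x - ε / 2 ≤ ⨅ a : A, (φ a + dist (a : X) q / infDist q A - 1) := by
          apply le_ciInf
          intro a
          show φ x - ε / 2 ≤ φ a + dist (a : X) q / infDist q A - 1
          by_cases ha : dist (a : X) x < δ₁
          · have hφa := abs_lt.mp (by rw [← Real.dist_eq]; exact hδ₁' a.2 ha)
            have h1 : infDist q A ≤ dist (a : X) q := by
              rw [dist_comm]; exact infDist_le_dist_of_mem a.2
            have h2 : (1 : ℝ) ≤ dist (a : X) q / infDist q A :=
              (one_le_div hD).mpr h1
            linarith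
          · push_neg at ha
            have htri : dist (a : X) x ≤ dist (a : X) q + dist q x := dist_triangle _ _ _
            have hdq : δ₁ / 2 ≤ dist (a : X) q := by
              have : dist q x < δ₁ / 3 := lt_of_lt_of_le hq hδa
              linarith
            have hMδ : M * (δ₁ / (2 * M)) = δ₁ / 2 := by field_simp
            have hdiv : M ≤ dist (a : X) q / infDist q A := by
              rw [le_div_iff₀ hD]
              have c1 : M * infDist q A ≤ M * δ :=
                mul_le_mul_of_nonneg_left hDlt.le hM0.le
              have c2 : M * δ ≤ M * (δ₁ / (2 * M)) :=
                mul_le_mul_of_nonneg_left hδb hM0.le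
              calc M * infDist q A ≤ M * δ := c1
                _ ≤ M * (δ₁ / (2 * M)) := c2
                _ = δ₁ / 2 := hMδ
                _ ≤ dist (a : X) q := hdq
            have h1 : -C ≤ φ a := (abs_le.mp (hC a a.2)).1
            have h2 : φ x ≤ |φ x| := le_abs_self _
            rw [hM] at hdiv
            linarith
        linarith
      · -- upper bound
        have hlt : infDist q A < infDist q A * (1 + ε') := by nlinarith
        obtain ⟨b, hbA, hbq⟩ := (infDist_lt_iff ⟨a₀, ha₀⟩).mp hlt
        have hub : (⨅ a : A, (φ a + dist (a : X) q / infDist q A - 1)) ≤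
            φ b + dist b q / infDist q A - 1 := ciInf_le (hbdd q) ⟨b, hbA⟩
        have hdivb : dist b q / infDist q A < 1 + ε' := by
          rw [div_lt_iff₀ hD, dist_comm]
          nlinarith
        have hbx : dist b x < δ₁ := by
          have htri : dist b x ≤ dist b q + dist q x := dist_triangle _ _ _
          have h1 : dist b q < infDist q A * (1 + ε') := by rw [dist_comm]; exact hbq
          have h2 : infDist q A * (1 + ε') ≤ δ * 2 := by nlinarith
          have h3 : δ ≤ δ₁ / 3 := hδa
          linarith
        have hφb' := abs_lt.mp (by rw [← Real.dist_eq]; exact hδ₁' hbA hbx)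
        linarith
  · -- x ∉ A
    have hx' : 0 < infDist x A := hDpos x hx
    have heq : ∀ p ∉ A, f p = F p / infDist p A - 1 := by
      intro p hp
      rw [hf p hp]
      have hD := hDpos p hp
      have hfun : (fun a : A => φ a + dist (a : X) p / infDist p A - 1)
          = fun a : A => (φ a * infDist p A + dist (a : X) p) / infDist p A - 1 := by
        funext a
        rw [add_div, mul_div_cancel_right₀ _ hD.ne']
      rw [hfun, inf_div_sub_one _ (hbF p) hD, hF]
    have hg : ContinuousAt (fun p => F p / infDist p A - 1) x :=
      ((hFcont.continuousAt).div ((continuous_infDist_pt A).continuousAt) hx'.ne').sub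
        continuousAt_const
    apply hg.congr
    filter_upwards [hAc.isOpen_compl.mem_nhds hx] with p hp
    exact (heq p hp).symm
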